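/- Let F be an n×n real nonnegative matrix and V an n×n real Metzler and Hurwitz matrix, and let r > ρ(F V⁻¹) be a real number. Then F + rV is Hurwitz, -(F + rV)⁻¹ is entrywise nonnegative, and for every vector z ∈ ℝⁿ with all entries strictly positive, the vector w := -(F + rV)⁻¹ z has all entries strictly positive and satisfies (F + rV) w < 0 entrywise. -/

import Mathlib

open Matrix

/-- A square real matrix is *Metzler* if all its off-diagonal entries are nonnegative. -/
def IsMetzler {n : ℕ} (A : Matrix (Fin n) (Fin n) ℝ) : Prop :=
  ∀ i j, i ≠ j → 0 ≤ A i j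

/-- A square real matrix is *Hurwitz* if every complex eigenvalue has negative real part. -/
def IsHurwitz {n : ℕ} (A : Matrix (Fin n) (Fin n) ℝ) : Prop :=
  ∀ μ ∈ spectrum ℂ (A.map Complex.ofReal), μ.re < 0

/-- The spectral radius of a square real matrix: the maximum modulus of its complex
eigenvalues. -/
noncomputable def specRad {n : ℕ} (A : Matrix (Fin n) (Fin n) ℝ) : ℝ :=
  sSup {x : ℝ | ∃ μ ∈ spectrum ℂ (A.map Complex.ofReal), x = ‖μ‖}

section Auxiliary

attribute [local instance] Matrix.linftyOpNormedAddCommGroup Matrix.linftyOpNormedSpace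
  Matrix.linftyOpNormedRing Matrix.linftyOpNormedAlgebra

private lemma ring_inverse_eq {A : Type*} [MonoidWithZero A]
    {a b : A} (h1 : a * b = 1) (h2 : b * a = 1) : Ring.inverse a = b := by
  rw [show a = ((⟨a, b, h1, h2⟩ : Aˣ) : A) from rfl, Ring.inverse_unit]; rfl

variable {n : ℕ}

/-- The entry-evaluation continuous linear map on real matrices. -/
private noncomputable def entryCLM (i j : Fin n) : Matrix (Fin n) (Fin n) ℝ →L[ℝ] ℝ :=
  LinearMap.toContinuousLinearMap
    { toFun := fun M => M i j, map_add' := fun _ _ => rfl, map_smul' := fun _ _ => rfl }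

private lemma entryCLM_apply (i j : Fin n) (M : Matrix (Fin n) (Fin n) ℝ) :
    entryCLM i j M = M i j := rfl

private lemma mul_entry_nonneg {A B : Matrix (Fin n) (Fin n) ℝ} (hA : ∀ i j, 0 ≤ A i j)
    (hB : ∀ i j, 0 ≤ B i j) : ∀ i j, 0 ≤ (A * B) i j := fun i j => by
  rw [Matrix.mul_apply]; exact Finset.sum_nonneg fun l _ => mul_nonneg (hA i l) (hB l j)

private lemma tsum_pow_entry_nonneg {M : Matrix (Fin n) (Fin n) ℝ} (hM : ‖M‖ < 1)
    (h : ∀ i j, 0 ≤ M i j) : ∀ i j, 0 ≤ (∑' k : ℕ, M ^ k) i j := by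
  haveI : CompleteSpace (Matrix (Fin n) (Fin n) ℝ) := FiniteDimensional.complete ℝ _
  intro i j
  have hs : Summable (fun k : ℕ => M ^ k) := summable_geometric_of_norm_lt_one hM
  have hpow : ∀ k : ℕ, ∀ i j, 0 ≤ (M ^ k) i j := by
    intro k
    induction k with
    | zero => intro i j; by_cases hij : i = j <;> simp [Matrix.one_apply, hij]
    | succ k ih => rw [pow_succ]; exact mul_entry_nonneg ih h
  have := (entryCLM i j).map_tsum hs
  rw [entryCLM_apply] at this
  rw [this]
  exact tsum_nonneg fun k => hpow k i j

private lemma isUnit_of_map {M : Matrix (Fin n) (Fin n) ℝ} (h : IsUnit (M.map Complex.ofReal)) :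
    IsUnit M := by
  rw [Matrix.isUnit_iff_isUnit_det, isUnit_iff_ne_zero] at h ⊢
  intro h0
  apply h
  have : (M.map Complex.ofReal).det = (M.det : ℂ) := by
    rw [show M.map Complex.ofReal = Complex.ofRealHom.mapMatrix M from rfl,
      ← RingHom.map_det Complex.ofRealHom M]; rfl
  rw [this, h0, Complex.ofReal_zero]

private lemma map_smul_one_sub (B : Matrix (Fin n) (Fin n) ℝ) (t : ℝ) :
    ((t • (1 : Matrix (Fin n) (Fin n) ℝ) - B).map Complex.ofReal)
      = (t : ℂ) • (1 : Matrix (Fin n) (Fin n) ℂ) - B.map Complex.ofReal := by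
  ext i j
  by_cases h : i = j <;>
    simp [Matrix.map_apply, Matrix.one_apply, h, Matrix.sub_apply, Matrix.smul_apply]

private lemma isUnit_smul_one_sub (B : Matrix (Fin n) (Fin n) ℝ) (t : ℝ)
    (h : (t : ℂ) ∉ spectrum ℂ (B.map Complex.ofReal)) :
    IsUnit (t • (1 : Matrix (Fin n) (Fin n) ℝ) - B) := by
  apply isUnit_of_map
  rw [map_smul_one_sub]
  have := spectrum.notMem_iff.mp h
  rwa [Algebra.algebraMap_eq_smul_one] at this

/-- The key continuation lemma: if `B` has nonnegative off-diagonal entries and `t • 1 - B`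
is invertible for all `t ≥ t₀`, then all these inverses have nonnegative entries. -/
private lemma ringInverse_entries_nonneg (B : Matrix (Fin n) (Fin n) ℝ)
    (hB : ∀ i j, i ≠ j → 0 ≤ B i j) {t₀ : ℝ}
    (hinv : ∀ t, t₀ ≤ t → IsUnit (t • (1 : Matrix (Fin n) (Fin n) ℝ) - B)) :
    ∀ t, t₀ ≤ t → ∀ i j, 0 ≤ Ring.inverse (t • (1 : Matrix (Fin n) (Fin n) ℝ) - B) i j := by
  haveI : CompleteSpace (Matrix (Fin n) (Fin n) ℝ) := FiniteDimensional.complete ℝ _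
  intro t ht
  set g : ℝ → Matrix (Fin n) (Fin n) ℝ :=
    fun u => Ring.inverse (u • (1 : Matrix (Fin n) (Fin n) ℝ) - B) with hgdef
  set s : ℝ := ∑ i, ∑ j, |B i j| with hsdef
  have hs0 : 0 ≤ s :=
    Finset.sum_nonneg fun i _ => Finset.sum_nonneg fun j _ => abs_nonneg _
  have habs : ∀ i, |B i i| ≤ s := by
    intro i
    calc |B i i| ≤ ∑ j, |B i j| :=
          Finset.single_le_sum (fun j _ => abs_nonneg (B i j)) (Finset.mem_univ i)
      _ ≤ s := Finset.single_le_sum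
          (fun i _ => Finset.sum_nonneg fun j _ => abs_nonneg (B i j)) (Finset.mem_univ i)
  have hN : ∀ i j, 0 ≤ (B + s • (1 : Matrix (Fin n) (Fin n) ℝ)) i j := by
    intro i j
    by_cases hij : i = j
    · subst hij
      have := (abs_le.mp (habs i)).1
      simp only [Matrix.add_apply, Matrix.smul_apply, Matrix.one_apply_eq,
        smul_eq_mul, mul_one]
      linarith
    · simpa [Matrix.add_apply, Matrix.smul_apply, Matrix.one_apply_ne hij] using hB i j hij
  set N : Matrix (Fin n) (Fin n) ℝ := B + s • (1 : Matrix (Fin n) (Fin n) ℝ) with hNdef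
  set T : ℝ := max t (‖N‖ + 1) with hTdef
  have hTt : t ≤ T := le_max_left _ _
  have hTN : ‖N‖ < T + s := by
    have := le_max_right t (‖N‖ + 1); linarith
  have hc : 0 < T + s := lt_of_le_of_lt (norm_nonneg N) hTN
  have hdecomp : ∀ u : ℝ, u • (1 : Matrix (Fin n) (Fin n) ℝ) - B
      = (u + s) • (1 : Matrix (Fin n) (Fin n) ℝ) - N := by
    intro u; rw [hNdef, add_smul]; abel
  -- base case
  have base : ∀ i j, 0 ≤ g T i j := by
    have hMn : ‖(T + s)⁻¹ • N‖ < 1 := by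
      rw [norm_smul, Real.norm_eq_abs, abs_of_pos (inv_pos.mpr hc)]
      rw [inv_mul_eq_div, div_lt_one hc]; exact hTN
    have hMnn : ∀ i j, 0 ≤ ((T + s)⁻¹ • N) i j := by
      intro i j
      simp only [Matrix.smul_apply, smul_eq_mul]
      exact mul_nonneg (inv_nonneg.mpr hc.le) (hN i j)
    have hfac : T • (1 : Matrix (Fin n) (Fin n) ℝ) - B
        = (T + s) • ((1 : Matrix (Fin n) (Fin n) ℝ) - (T + s)⁻¹ • N) := by
      rw [hdecomp, smul_sub, smul_smul, mul_inv_cancel₀ hc.ne', one_smul]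
    have h1 : (T • (1 : Matrix (Fin n) (Fin n) ℝ) - B)
        * ((T + s)⁻¹ • ∑' k : ℕ, ((T + s)⁻¹ • N) ^ k) = 1 := by
      rw [hfac, smul_mul_smul_comm, mul_inv_cancel₀ hc.ne', one_smul]
      exact mul_neg_geom_series _ hMn
    have h2 : ((T + s)⁻¹ • ∑' k : ℕ, ((T + s)⁻¹ • N) ^ k)
        * (T • (1 : Matrix (Fin n) (Fin n) ℝ) - B) = 1 := by
      rw [hfac, smul_mul_smul_comm, inv_mul_cancel₀ hc.ne', one_smul]
      exact geom_series_mul_neg _ hMn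
    have hgT : g T = (T + s)⁻¹ • ∑' k : ℕ, ((T + s)⁻¹ • N) ^ k := ring_inverse_eq h1 h2
    intro i j
    rw [hgT]
    simp only [Matrix.smul_apply, smul_eq_mul]
    exact mul_nonneg (inv_nonneg.mpr hc.le) (tsum_pow_entry_nonneg hMn hMnn i j)
  -- continuity and uniform bound
  have hcont : ContinuousOn g (Set.Icc t T) := by
    intro u hu
    have hu' : IsUnit (u • (1 : Matrix (Fin n) (Fin n) ℝ) - B) := hinv u (ht.trans hu.1)
    have c1 : ContinuousAt (fun u : ℝ => u • (1 : Matrix (Fin n) (Fin n) ℝ) - B) u :=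
      ((continuous_id.smul continuous_const).sub continuous_const).continuousAt
    have c2 : ContinuousAt Ring.inverse (u • (1 : Matrix (Fin n) (Fin n) ℝ) - B) := by
      have := NormedRing.inverse_continuousAt hu'.unit
      rwa [hu'.unit_spec] at this
    exact ContinuousAt.continuousWithinAt
      (ContinuousAt.comp (f := fun u : ℝ => u • (1 : Matrix (Fin n) (Fin n) ℝ) - B) c2 c1)
  obtain ⟨C, hC⟩ := isCompact_Icc.exists_bound_of_continuousOn hcont
  set C0 : ℝ := max C 1 with hC0def
  have hC0 : 0 < C0 := lt_of_lt_of_le one_pos (le_max_right _ _)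
  have hCb : ∀ u ∈ Set.Icc t T, ‖g u‖ ≤ C0 := fun u hu => (hC u hu).trans (le_max_left _ _)
  set δ : ℝ := C0⁻¹ / 2 with hδdef
  have hδ0 : 0 < δ := by positivity
  -- one step to the left
  have step : ∀ u v : ℝ, t ≤ u → u ≤ v → v ≤ T → v - u ≤ δ →
      (∀ i j, 0 ≤ g v i j) → ∀ i j, 0 ≤ g u i j := by
    intro u v hu huv hvT hd hgv
    have hvmem : v ∈ Set.Icc t T := ⟨hu.trans huv, hvT⟩
    have hvu : IsUnit (v • (1 : Matrix (Fin n) (Fin n) ℝ) - B) := hinv v (ht.trans hvmem.1)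
    have hMnn : ∀ i j, 0 ≤ ((v - u) • g v) i j := by
      intro i j
      simp only [Matrix.smul_apply, smul_eq_mul]
      exact mul_nonneg (by linarith) (hgv i j)
    have hMn : ‖(v - u) • g v‖ < 1 := by
      rw [norm_smul, Real.norm_eq_abs, abs_of_nonneg (by linarith : (0:ℝ) ≤ v - u)]
      calc (v - u) * ‖g v‖ ≤ δ * C0 :=
            mul_le_mul hd (hCb v hvmem) (norm_nonneg _) hδ0.le
        _ = 1 / 2 := by rw [hδdef, div_mul_eq_mul_div, inv_mul_cancel₀ hC0.ne']
        _ < 1 := by norm_num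
    have hfac : u • (1 : Matrix (Fin n) (Fin n) ℝ) - B
        = (v • (1 : Matrix (Fin n) (Fin n) ℝ) - B)
          * ((1 : Matrix (Fin n) (Fin n) ℝ) - (v - u) • g v) := by
      rw [mul_sub, mul_one, mul_smul_comm, Ring.mul_inverse_cancel _ hvu, sub_smul]
      abel
    have h1 : (u • (1 : Matrix (Fin n) (Fin n) ℝ) - B)
        * ((∑' k : ℕ, ((v - u) • g v) ^ k) * g v) = 1 := by
      rw [hfac, mul_assoc, ← mul_assoc ((1 : Matrix (Fin n) (Fin n) ℝ) - (v - u) • g v)]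
      erw [mul_neg_geom_series _ hMn]
      rw [one_mul, Ring.mul_inverse_cancel _ hvu]
    have h2 : ((∑' k : ℕ, ((v - u) • g v) ^ k) * g v)
        * (u • (1 : Matrix (Fin n) (Fin n) ℝ) - B) = 1 := by
      rw [hfac, mul_assoc, ← mul_assoc (g v), Ring.inverse_mul_cancel _ hvu, one_mul]
      exact geom_series_mul_neg _ hMn
    have hgu : g u = (∑' k : ℕ, ((v - u) • g v) ^ k) * g v := ring_inverse_eq h1 h2
    intro i j
    rw [hgu]
    exact mul_entry_nonneg (tsum_pow_entry_nonneg hMn hMnn) hgv i j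
  -- downward induction
  have key : ∀ k : ℕ, ∀ u : ℝ, t ≤ u → u ≤ T → T - k * δ ≤ u → ∀ i j, 0 ≤ g u i j := by
    intro k
    induction k with
    | zero =>
      intro u h1 h2 h3
      simp only [Nat.cast_zero, zero_mul, sub_zero] at h3
      have : u = T := le_antisymm h2 h3
      rw [this]; exact base
    | succ k ih =>
      intro u h1 h2 h3
      by_cases hcase : T - k * δ ≤ u
      · exact ih u h1 h2 hcase
      · push_neg at hcase
        have hkd : (0:ℝ) ≤ k * δ := by positivity
        have hv : ∀ i j, 0 ≤ g (T - k * δ) i j :=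
          ih (T - k * δ) (le_of_lt (h1.trans_lt hcase)) (by linarith) le_rfl
        refine step u (T - k * δ) h1 hcase.le (by linarith) ?_ hv
        push_cast at h3
        linarith
  -- conclude
  have hceil : T - (⌈(T - t) / δ⌉₊ : ℝ) * δ ≤ t := by
    have h1 : (T - t) / δ ≤ (⌈(T - t) / δ⌉₊ : ℝ) := Nat.le_ceil _
    have := (div_le_iff₀ hδ0).mp h1
    linarith
  exact key ⌈(T - t) / δ⌉₊ t le_rfl hTt hceil

set_option maxHeartbeats 1000000 in
/-- For `F ≥ 0`, `V` Metzler and Hurwitz, and `r > ρ(F V⁻¹)`: `F + rV` is Hurwitz,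
`-(F + rV)⁻¹ ≥ 0` entrywise, and for every `z > 0` the vector `w = -(F + rV)⁻¹ z`
is entrywise positive and satisfies `(F + rV) w < 0` entrywise. -/
theorem hurwitz_and_pos_vec_of_specRad_lt {n : ℕ} (F V : Matrix (Fin n) (Fin n) ℝ)
    (hF : ∀ i j, 0 ≤ F i j) (hVmetzler : IsMetzler V) (hVhurwitz : IsHurwitz V)
    (r : ℝ) (hr : specRad (F * V⁻¹) < r) :
    IsHurwitz (F + r • V) ∧ (∀ i j, 0 ≤ (-((F + r • V)⁻¹)) i j) ∧
      ∀ z : Fin n → ℝ, (∀ i, 0 < z i) →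
        (∀ i, 0 < ((-((F + r • V)⁻¹)) *ᵥ z) i) ∧
        ∀ i, ((F + r • V) *ᵥ ((-((F + r • V)⁻¹)) *ᵥ z)) i < 0 := by
  classical
  rcases Nat.eq_zero_or_pos n with hn | hn
  · subst hn
    haveI : Subsingleton (Matrix (Fin 0) (Fin 0) ℂ) := ⟨fun a b => by ext i j; exact i.elim0⟩
    refine ⟨?_, fun i => i.elim0, fun z hz => ⟨fun i => i.elim0, fun i => i.elim0⟩⟩
    intro μ hμ
    exact absurd (isUnit_of_subsingleton _) (spectrum.mem_iff.mp hμ)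
  haveI : CompleteSpace (Matrix (Fin n) (Fin n) ℂ) := FiniteDimensional.complete ℂ _
  haveI : Nonempty (Fin n) := ⟨⟨0, hn⟩⟩
  -- V is invertible, with nonpositive inverse
  have hinvV : ∀ t : ℝ, (0:ℝ) ≤ t → IsUnit (t • (1 : Matrix (Fin n) (Fin n) ℝ) - V) := by
    intro t ht
    refine isUnit_smul_one_sub V t fun hmem => ?_
    have := hVhurwitz _ hmem
    rw [Complex.ofReal_re] at this
    linarith
  have hVnn := ringInverse_entries_nonneg V hVmetzler hinvV 0 le_rfl
  have hVu : IsUnit V := by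
    have := hinvV 0 le_rfl
    rw [zero_smul, zero_sub] at this
    simpa using this.neg
  have hVdet : IsUnit V.det := (Matrix.isUnit_iff_isUnit_det V).mp hVu
  have hVinv : Ring.inverse ((0:ℝ) • (1 : Matrix (Fin n) (Fin n) ℝ) - V) = -(V⁻¹) := by
    rw [zero_smul, zero_sub]
    exact ring_inverse_eq (by rw [neg_mul_neg, Matrix.mul_nonsing_inv V hVdet])
      (by rw [neg_mul_neg, Matrix.nonsing_inv_mul V hVdet])
  rw [hVinv] at hVnn
  -- spectral radius bookkeeping
  have hr' : sSup {x : ℝ | ∃ μ ∈ spectrum ℂ ((F * V⁻¹).map Complex.ofReal),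
      x = ‖μ‖} < r := hr
  have hSbdd : BddAbove {x : ℝ | ∃ μ ∈ spectrum ℂ ((F * V⁻¹).map Complex.ofReal),
      x = ‖μ‖} := by
    have h1 : {x : ℝ | ∃ μ ∈ spectrum ℂ ((F * V⁻¹).map Complex.ofReal), x = ‖μ‖}
        = (fun μ : ℂ => ‖μ‖) '' spectrum ℂ ((F * V⁻¹).map Complex.ofReal) := by
      ext x
      constructor
      · rintro ⟨μ, hμ, rfl⟩; exact ⟨μ, hμ, rfl⟩
      · rintro ⟨μ, hμ, rfl⟩; exact ⟨μ, hμ, rfl⟩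
    rw [h1]
    exact ((spectrum.isCompact _).image continuous_norm).bddAbove
  have h0r : 0 < r := by
    obtain ⟨μ, hμ⟩ := spectrum.nonempty ((F * V⁻¹).map Complex.ofReal)
    have hx := le_csSup hSbdd ⟨μ, hμ, rfl⟩
    have h0 : (0:ℝ) ≤ ‖μ‖ := norm_nonneg _
    linarith
  -- the matrix B = -(F * V⁻¹) and the resolvent at r
  have hBnn : ∀ i j, 0 ≤ (-(F * V⁻¹)) i j := by
    intro i j
    rw [show -(F * V⁻¹) = F * (-(V⁻¹)) by rw [mul_neg]]
    exact mul_entry_nonneg hF hVnn i j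
  have hBmap : (-(F * V⁻¹)).map Complex.ofReal = -((F * V⁻¹).map Complex.ofReal) := by
    ext i j; simp [Matrix.map_apply]
  have hinvB : ∀ t : ℝ, r ≤ t → IsUnit (t • (1 : Matrix (Fin n) (Fin n) ℝ) - -(F * V⁻¹)) := by
    intro t htr
    refine isUnit_smul_one_sub _ t fun hmem => ?_
    rw [hBmap, spectrum.mem_iff] at hmem
    apply hmem
    have heq : algebraMap ℂ (Matrix (Fin n) (Fin n) ℂ) (t:ℂ) - -((F * V⁻¹).map Complex.ofReal)
        = -(algebraMap ℂ (Matrix (Fin n) (Fin n) ℂ) (-(t:ℂ))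
            - (F * V⁻¹).map Complex.ofReal) := by
      rw [map_neg]; abel
    rw [heq]
    apply IsUnit.neg
    by_contra hU
    have hneg : (-(t:ℂ)) ∈ spectrum ℂ ((F * V⁻¹).map Complex.ofReal) := hU
    have habs := le_csSup hSbdd ⟨-(t:ℂ), hneg, rfl⟩
    rw [show ‖-(t:ℂ)‖ = |t| by simp] at habs
    rw [abs_of_pos (lt_of_lt_of_le h0r htr)] at habs
    linarith
  have hGnn := ringInverse_entries_nonneg (-(F * V⁻¹)) (fun i j _ => hBnn i j) hinvB r le_rfl
  have hGu : IsUnit (r • (1 : Matrix (Fin n) (Fin n) ℝ) - -(F * V⁻¹)) := hinvB r le_rfl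
  have hGright : (r • (1 : Matrix (Fin n) (Fin n) ℝ) - -(F * V⁻¹))
      * Ring.inverse (r • (1 : Matrix (Fin n) (Fin n) ℝ) - -(F * V⁻¹)) = 1 :=
    Ring.mul_inverse_cancel _ hGu
  have hGleft : Ring.inverse (r • (1 : Matrix (Fin n) (Fin n) ℝ) - -(F * V⁻¹))
      * (r • (1 : Matrix (Fin n) (Fin n) ℝ) - -(F * V⁻¹)) = 1 :=
    Ring.inverse_mul_cancel _ hGu
  -- factorization F + r V = (r 1 - B) V
  have hfacA : F + r • V = (r • (1 : Matrix (Fin n) (Fin n) ℝ) - -(F * V⁻¹)) * V := by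
    rw [sub_mul, smul_mul_assoc, one_mul, neg_mul, mul_assoc,
      Matrix.nonsing_inv_mul V hVdet, mul_one, sub_neg_eq_add, add_comm]
  have hAu : IsUnit (F + r • V) := by rw [hfacA]; exact hGu.mul hVu
  have hAdet : IsUnit (F + r • V).det := (Matrix.isUnit_iff_isUnit_det _).mp hAu
  have hAinv : (F + r • V)⁻¹
      = V⁻¹ * Ring.inverse (r • (1 : Matrix (Fin n) (Fin n) ℝ) - -(F * V⁻¹)) := by
    rw [Matrix.nonsing_inv_eq_ringInverse, hfacA]
    refine ring_inverse_eq ?_ ?_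
    · rw [mul_assoc, ← mul_assoc V, Matrix.mul_nonsing_inv V hVdet, one_mul, hGright]
    · rw [mul_assoc, ← mul_assoc (Ring.inverse _), hGleft, one_mul,
        Matrix.nonsing_inv_mul V hVdet]
  have hPnn : ∀ i j, 0 ≤ (-((F + r • V)⁻¹)) i j := by
    intro i j
    rw [hAinv, ← neg_mul]
    exact mul_entry_nonneg hVnn hGnn i j
  -- part (c)
  have hPA : (-((F + r • V)⁻¹)) * (F + r • V) = -1 := by
    rw [neg_mul, Matrix.nonsing_inv_mul _ hAdet]
  have hAP : (F + r • V) * (-((F + r • V)⁻¹)) = -1 := by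
    rw [mul_neg, Matrix.mul_nonsing_inv _ hAdet]
  have hpos : ∀ z : Fin n → ℝ, (∀ i, 0 < z i) →
      ∀ i, 0 < ((-((F + r • V)⁻¹)) *ᵥ z) i := by
    intro z hz i
    have hterm : ∀ j, 0 ≤ (-((F + r • V)⁻¹)) i j * z j :=
      fun j => mul_nonneg (hPnn i j) (hz j).le
    have hsum : ((-((F + r • V)⁻¹)) *ᵥ z) i = ∑ j, (-((F + r • V)⁻¹)) i j * z j := by
      simp [Matrix.mulVec, dotProduct]
    have hge : 0 ≤ ((-((F + r • V)⁻¹)) *ᵥ z) i := by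
      rw [hsum]; exact Finset.sum_nonneg fun j _ => hterm j
    rcases hge.lt_or_eq with h | h
    · exact h
    · exfalso
      rw [hsum] at h
      have hall := (Finset.sum_eq_zero_iff_of_nonneg (fun j _ => hterm j)).mp h.symm
      have hrowz : ∀ j, (-((F + r • V)⁻¹)) i j = 0 := by
        intro j
        rcases mul_eq_zero.mp (hall j (Finset.mem_univ j)) with h' | h'
        · exact h'
        · exact absurd h' (hz j).ne'
      have h1 : ((-((F + r • V)⁻¹)) * (F + r • V)) i i = 0 := by
        rw [Matrix.mul_apply]
        exact Finset.sum_eq_zero fun j _ => by rw [hrowz j, zero_mul]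
      rw [hPA] at h1
      simp [Matrix.one_apply_eq] at h1
  have hmv : ∀ z : Fin n → ℝ, (F + r • V) *ᵥ ((-((F + r • V)⁻¹)) *ᵥ z) = -z := by
    intro z
    rw [Matrix.mulVec_mulVec, hAP, Matrix.neg_mulVec, Matrix.one_mulVec]
  refine ⟨?_, hPnn, fun z hz => ⟨hpos z hz, fun i => by rw [hmv z]; simpa using (hz i)⟩⟩
  -- Hurwitz via the weighted Gershgorin argument
  have hw : ∀ i, 0 < ((-((F + r • V)⁻¹)) *ᵥ (fun _ => (1:ℝ))) i := hpos _ fun _ => one_pos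
  set w : Fin n → ℝ := (-((F + r • V)⁻¹)) *ᵥ (fun _ => (1:ℝ)) with hwdef
  have hAw : (F + r • V) *ᵥ w = -(fun _ => (1:ℝ)) := hmv _
  have hAwi : ∀ i, ∑ j, (F + r • V) i j * w j = -1 := by
    intro i
    have := congrFun hAw i
    simpa [Matrix.mulVec, dotProduct] using this
  have hMetz : ∀ i j, i ≠ j → 0 ≤ (F + r • V) i j := by
    intro i j hij
    rw [show (F + r • V) i j = F i j + r * V i j by
      simp [Matrix.add_apply, Matrix.smul_apply]]
    exact add_nonneg (hF i j) (mul_nonneg h0r.le (hVmetzler i j hij))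
  intro μ hμ
  rw [spectrum.mem_iff, Algebra.algebraMap_eq_smul_one] at hμ
  have hdet0 : (μ • (1 : Matrix (Fin n) (Fin n) ℂ) - (F + r • V).map Complex.ofReal).det
      = 0 := by
    by_contra hne
    exact hμ ((Matrix.isUnit_iff_isUnit_det _).mpr (isUnit_iff_ne_zero.mpr hne))
  obtain ⟨x, hx0, hxeq⟩ := (Matrix.exists_mulVec_eq_zero_iff).mpr hdet0
  have hxe : ∀ i, μ * x i = ∑ j, ((F + r • V) i j : ℂ) * x j := by
    intro i
    have h := congrFun hxeq i
    rw [Matrix.sub_mulVec, Matrix.smul_mulVec, Matrix.one_mulVec] at h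
    have h' : (μ • x) i = ((F + r • V).map Complex.ofReal *ᵥ x) i := by
      have := sub_eq_zero.mp h
      rw [this]
    simpa [Matrix.mulVec, dotProduct, Matrix.map_apply] using h'
  obtain ⟨i, -, hi⟩ := Finset.exists_max_image Finset.univ
    (fun j => ‖x j‖ / w j) Finset.univ_nonempty
  have hfi : 0 < ‖x i‖ / w i := by
    obtain ⟨j, hj⟩ := Function.ne_iff.mp hx0
    exact lt_of_lt_of_le (div_pos (norm_pos_iff.mpr hj) (hw j)) (hi j (Finset.mem_univ j))
  have hxw : ∀ j, ‖x j‖ ≤ (‖x i‖ / w i) * w j := by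
    intro j
    have h1 := hi j (Finset.mem_univ j)
    calc ‖x j‖ = (‖x j‖ / w j) * w j :=
          (div_mul_cancel₀ _ (hw j).ne').symm
      _ ≤ (‖x i‖ / w i) * w j := mul_le_mul_of_nonneg_right h1 (hw j).le
  have hrow : (μ - ((F + r • V) i i : ℂ)) * x i
      = ∑ j ∈ Finset.univ.erase i, ((F + r • V) i j : ℂ) * x j := by
    have hsum := hxe i
    have herase := Finset.sum_erase_add Finset.univ
      (fun j => ((F + r • V) i j : ℂ) * x j) (Finset.mem_univ i)
    rw [← herase] at hsum
    rw [sub_mul, hsum]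
    ring
  have habs1 : ‖μ - ((F + r • V) i i : ℂ)‖ * ‖x i‖
      ≤ ∑ j ∈ Finset.univ.erase i, (F + r • V) i j * ‖x j‖ := by
    rw [← norm_mul, hrow]
    refine le_trans (norm_sum_le _ _) (le_of_eq (Finset.sum_congr rfl fun j hj => ?_))
    have hj' : j ≠ i := (Finset.mem_erase.mp hj).1
    rw [norm_mul, Complex.norm_real, Real.norm_eq_abs, abs_of_nonneg (hMetz i j (Ne.symm hj'))]
  have hsum2 : ∑ j ∈ Finset.univ.erase i, (F + r • V) i j * ‖x j‖
      ≤ (‖x i‖ / w i) * ∑ j ∈ Finset.univ.erase i, (F + r • V) i j * w j := by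
    rw [Finset.mul_sum]
    refine Finset.sum_le_sum fun j hj => ?_
    have hj' : j ≠ i := (Finset.mem_erase.mp hj).1
    have hAij : 0 ≤ (F + r • V) i j := hMetz i j (Ne.symm hj')
    calc (F + r • V) i j * ‖x j‖
        ≤ (F + r • V) i j * ((‖x i‖ / w i) * w j) :=
          mul_le_mul_of_nonneg_left (hxw j) hAij
      _ = (‖x i‖ / w i) * ((F + r • V) i j * w j) := by ring
  have hsum3 : ∑ j ∈ Finset.univ.erase i, (F + r • V) i j * w j
      = -1 - (F + r • V) i i * w i := by
    have herase : ∑ j ∈ Finset.univ.erase i, (F + r • V) i j * w j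
        + (F + r • V) i i * w i = ∑ j, (F + r • V) i j * w j :=
      Finset.sum_erase_add _ _ (Finset.mem_univ i)
    have := hAwi i
    linarith
  have hxi : ‖x i‖ = (‖x i‖ / w i) * w i :=
    (div_mul_cancel₀ _ (hw i).ne').symm
  have hmain : ‖μ - ((F + r • V) i i : ℂ)‖ * w i
      ≤ -1 - (F + r • V) i i * w i := by
    have hchain : ‖μ - ((F + r • V) i i : ℂ)‖
        * ((‖x i‖ / w i) * w i)
        ≤ (‖x i‖ / w i) * (-1 - (F + r • V) i i * w i) := by
      rw [← hxi, ← hsum3]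
      exact le_trans habs1 hsum2
    rw [show ‖μ - ((F + r • V) i i : ℂ)‖ * ((‖x i‖ / w i) * w i)
        = (‖x i‖ / w i) * (‖μ - ((F + r • V) i i : ℂ)‖ * w i)
      from by ring] at hchain
    exact le_of_mul_le_mul_left hchain hfi
  have hre : μ.re - (F + r • V) i i ≤ ‖μ - ((F + r • V) i i : ℂ)‖ := by
    have h1 := Complex.re_le_norm (μ - ((F + r • V) i i : ℂ))
    simpa [Complex.sub_re, Complex.ofReal_re] using h1
  have h5 : μ.re * w i ≤ -1 := by
    nlinarith [mul_le_mul_of_nonneg_right hre (hw i).le]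
  nlinarith [hw i]

end Auxiliary
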